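/- For three points (xᵢ,pᵢ) ∈ O = {p < 0}, i = 1,2,3, the function F₀ = (x₂-x₃)√(p₂p₃) + (x₃-x₁)√(p₃p₁) + (x₁-x₂)√(p₁p₂) is invariant under the simultaneous SL(2,ℝ) action (xᵢ,pᵢ) ↦ ((αxᵢ+β)/(γxᵢ+δ), pᵢ(γxᵢ+δ)²) with αδ-βγ = 1, whenever γxᵢ+δ > 0 for all i. -/

import Mathlib

/-- `F₀` is invariant under the simultaneous `SL(2,ℝ)` action
`(xᵢ,pᵢ) ↦ ((αxᵢ+β)/(γxᵢ+δ), pᵢ(γxᵢ+δ)²)` with `αδ-βγ = 1` and `γxᵢ+δ > 0`. -/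
theorem F0_sl2_invariant (α β γ δ : ℝ) (hdet : α * δ - β * γ = 1)
    (x₁ p₁ x₂ p₂ x₃ p₃ : ℝ)
    (h₁ : p₁ < 0) (h₂ : p₂ < 0) (h₃ : p₃ < 0)
    (d₁ : γ * x₁ + δ > 0) (d₂ : γ * x₂ + δ > 0) (d₃ : γ * x₃ + δ > 0) :
    (letI x₁' := (α * x₁ + β) / (γ * x₁ + δ); letI p₁' := p₁ * (γ * x₁ + δ) ^ 2
     letI x₂' := (α * x₂ + β) / (γ * x₂ + δ); letI p₂' := p₂ * (γ * x₂ + δ) ^ 2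
     letI x₃' := (α * x₃ + β) / (γ * x₃ + δ); letI p₃' := p₃ * (γ * x₃ + δ) ^ 2
     (x₂' - x₃') * (Real.sqrt (-p₂') * Real.sqrt (-p₃')) +
     (x₃' - x₁') * (Real.sqrt (-p₃') * Real.sqrt (-p₁')) +
     (x₁' - x₂') * (Real.sqrt (-p₁') * Real.sqrt (-p₂'))) =
    (x₂ - x₃) * (Real.sqrt (-p₂) * Real.sqrt (-p₃)) +
    (x₃ - x₁) * (Real.sqrt (-p₃) * Real.sqrt (-p₁)) +
    (x₁ - x₂) * (Real.sqrt (-p₁) * Real.sqrt (-p₂)) := by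
  have diff : ∀ a b : ℝ, 0 < γ * a + δ → 0 < γ * b + δ →
      (α * a + β) / (γ * a + δ) - (α * b + β) / (γ * b + δ)
        = (a - b) / ((γ * a + δ) * (γ * b + δ)) := by
    intro a b ha hb
    rw [div_sub_div _ _ ha.ne' hb.ne']
    congr 1
    linear_combination (a - b) * hdet
  have key : ∀ p d : ℝ, p < 0 → 0 < d → Real.sqrt (-(p * d ^ 2)) = Real.sqrt (-p) * d := by
    intro p d hp hd
    rw [show -(p * d ^ 2) = (-p) * d ^ 2 by ring, Real.sqrt_mul (by linarith),
      Real.sqrt_sq hd.le]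
  show _ = _
  rw [key p₁ _ h₁ d₁, key p₂ _ h₂ d₂, key p₃ _ h₃ d₃,
    diff x₂ x₃ d₂ d₃, diff x₃ x₁ d₃ d₁, diff x₁ x₂ d₁ d₂]
  have cancel : ∀ u v w D E : ℝ, D ≠ 0 → E ≠ 0 →
      u / (D * E) * (v * D * (w * E)) = u * (v * w) := by
    intro u v w D E hD hE
    rw [div_mul_eq_mul_div, div_eq_iff (mul_ne_zero hD hE)]
    ring
  rw [cancel _ _ _ _ _ d₂.ne' d₃.ne', cancel _ _ _ _ _ d₃.ne' d₁.ne',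
    cancel _ _ _ _ _ d₁.ne' d₂.ne']
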